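/- Let m ≥ 2 be a natural number, and let F ∈ ℚ⟦X⟧ be the formal power series whose n-th coefficient is binom(mn, n)/((m−1)n + 1). Then F satisfies the functional equation F = 1 + X·F^m, equivalently F^m = (F − 1)/X. (Grunert's equation for the Fuss–Catalan generating function, 1841.) -/

import Mathlib

namespace FCaux

open Finset

/-- `B m x n = C(x + mn, n)`, the "second kind" Fuss–Catalan convolution family. -/
def B (m x n : ℕ) : ℚ := (Nat.choose (x + m * n) n : ℚ)

/-- `A m x n = (x/(x+mn)) C(x+mn, n)`, written without fractions as
`C(x+mn,n) - m C(x+m-1+m(n-1), n-1)`. -/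
def A (m x : ℕ) : ℕ → ℚ
  | 0 => 1
  | n + 1 => B m x (n + 1) - m * B m (x + m - 1) n

lemma B_zero (m x : ℕ) : B m x 0 = 1 := by simp [B]

lemma A_one_succ (m n : ℕ) (hm : 1 ≤ m) :
    A m 1 (n + 1) = B m 1 (n + 1) - m * B m m n := by
  have h : 1 + m - 1 = m := by omega
  simp only [A, h]

/-- Pascal's rule for `B`. -/
lemma pascalB (m x n : ℕ) :
    B m (x + 1) (n + 1) = B m x (n + 1) + B m (x + m) n := by
  have h1 : x + 1 + m * (n + 1) = (x + m * n + m) + 1 := by ring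
  have h2 : x + m * (n + 1) = x + m * n + m := by ring
  have h3 : x + m + m * n = x + m * n + m := by ring
  simp only [B, h1, h2, h3, Nat.choose_succ_succ' (x + m * n + m) n]
  push_cast
  ring

/-- Absorption: `C(m(n+1), n+1) = m · C(m-1 + mn, n)`. -/
lemma absorbB (m n : ℕ) (hm : 1 ≤ m) :
    B m 0 (n + 1) = m * B m (m - 1) n := by
  have hs : m * n + m - 1 + 1 = m * n + m := by omega
  have key := Nat.add_one_mul_choose_eq (m * n + m - 1) n
  rw [hs] at key
  -- key : (m*n+m) * C(m*n+m-1, n) = C(m*n+m, n+1) * (n+1)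
  have h1 : 0 + m * (n + 1) = m * n + m := by ring
  have h2 : m - 1 + m * n = m * n + m - 1 := by omega
  simp only [B, h1, h2]
  have hq : ((m * n + m : ℕ) : ℚ) * (Nat.choose (m * n + m - 1) n : ℚ)
      = (Nat.choose (m * n + m) (n + 1) : ℚ) * ((n : ℚ) + 1) := by
    exact_mod_cast congrArg (Nat.cast : ℕ → ℚ) key
  have hmn : ((m * n + m : ℕ) : ℚ) = (m : ℚ) * ((n : ℚ) + 1) := by push_cast; ring
  have hne : ((n : ℚ) + 1) ≠ 0 := by positivity
  apply mul_right_cancel₀ hne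
  rw [← hq, hmn]
  ring

/-- Key convolution: `∑_{k≤n} A(1,k) B(x, n-k) = B(x+1, n)`. -/
lemma C1 (m : ℕ) (hm : 1 ≤ m) :
    ∀ n x, ∑ k ∈ range (n + 1), A m 1 k * B m x (n - k) = B m (x + 1) n := by
  intro n
  induction n with
  | zero => intro x; simp [A, B]
  | succ n ih =>
    intro x
    induction x with
    | zero =>
      rw [sum_range_succ]
      have hsum : ∑ k ∈ range (n + 1), A m 1 k * B m 0 (n + 1 - k)
          = m * ∑ k ∈ range (n + 1), A m 1 k * B m (m - 1) (n - k) := by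
        rw [mul_sum]
        refine sum_congr rfl fun k hk => ?_
        have hk' : n + 1 - k = (n - k) + 1 := by
          have := mem_range.mp hk; omega
        rw [hk', absorbB m (n - k) hm]
        ring
      rw [hsum, ih (m - 1)]
      have h1 : m - 1 + 1 = m := by omega
      rw [h1, Nat.sub_self, A_one_succ m n hm, B_zero]
      ring
    | succ x ihx =>
      rw [sum_range_succ]
      have hsum : ∑ k ∈ range (n + 1), A m 1 k * B m (x + 1) (n + 1 - k)
          = (∑ k ∈ range (n + 1), A m 1 k * B m x (n + 1 - k))
            + ∑ k ∈ range (n + 1), A m 1 k * B m (x + m) (n - k) := by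
        rw [← sum_add_distrib]
        refine sum_congr rfl fun k hk => ?_
        have hk' : n + 1 - k = (n - k) + 1 := by
          have := mem_range.mp hk; omega
        rw [hk', pascalB]
        ring
      rw [hsum, ih (x + m)]
      have hprev : (∑ k ∈ range (n + 1), A m 1 k * B m x (n + 1 - k))
          + A m 1 (n + 1) * B m x (n + 1 - (n + 1)) = B m (x + 1) (n + 1) := by
        rw [← sum_range_succ]; exact ihx
      rw [Nat.sub_self] at hprev
      have hp2 := pascalB m (x + 1) n
      have hx1 : x + 1 + m = x + m + 1 := by ring
      rw [hx1] at hp2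
      rw [Nat.sub_self, B_zero] at *
      linarith [hprev, hp2]

/-- Convolution for `A`: `∑_{k≤n} A(1,k) A(x, n-k) = A(x+1, n)`. -/
lemma C2 (m : ℕ) (hm : 1 ≤ m) (n x : ℕ) :
    ∑ k ∈ range (n + 1), A m 1 k * A m x (n - k) = A m (x + 1) n := by
  cases n with
  | zero => simp [A]
  | succ n =>
    rw [sum_range_succ]
    have hsum : ∑ k ∈ range (n + 1), A m 1 k * A m x (n + 1 - k)
        = (∑ k ∈ range (n + 1), A m 1 k * B m x (n + 1 - k))
          - m * ∑ k ∈ range (n + 1), A m 1 k * B m (x + m - 1) (n - k) := by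
      rw [mul_sum, ← sum_sub_distrib]
      refine sum_congr rfl fun k hk => ?_
      have hk' : n + 1 - k = (n - k) + 1 := by
        have := mem_range.mp hk; omega
      rw [hk']
      simp only [A]
      ring
    rw [hsum, C1 m hm n (x + m - 1)]
    have h1 : x + m - 1 + 1 = x + m := by omega
    rw [h1]
    have hprev : (∑ k ∈ range (n + 1), A m 1 k * B m x (n + 1 - k))
        + A m 1 (n + 1) * B m x (n + 1 - (n + 1)) = B m (x + 1) (n + 1) := by
      rw [← sum_range_succ]; exact C1 m hm (n + 1) x
    rw [Nat.sub_self, B_zero] at hprev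
    have hAdef : A m (x + 1) (n + 1) = B m (x + 1) (n + 1) - m * B m (x + 1 + m - 1) n := rfl
    have h2 : x + 1 + m - 1 = x + m := by omega
    rw [hAdef, h2, Nat.sub_self]
    have hA0 : A m x 0 = 1 := rfl
    rw [hA0]
    linarith [hprev]

/-- `A 1 n` is the Fuss–Catalan number `C(mn,n)/((m-1)n+1)`. -/
lemma A_one_eq (m : ℕ) (hm : 1 ≤ m) (n : ℕ) :
    A m 1 n = (Nat.choose (m * n) n : ℚ) / (((m - 1) * n + 1 : ℕ) : ℚ) := by
  cases n with
  | zero => simp [A]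
  | succ j =>
    have harg : 1 + m * (j + 1) = m * (j + 1) + 1 := by ring
    have harg2 : m + m * j = m * (j + 1) := by ring
    rw [A_one_succ m j hm]
    simp only [B, harg, harg2]
    -- Pascal: C(m(j+1)+1, j+1) = C(m(j+1), j) + C(m(j+1), j+1)
    rw [Nat.choose_succ_succ' (m * (j + 1)) j]
    -- ratio fact
    have f2 := Nat.choose_succ_right_eq (m * (j + 1)) j
    -- f2 : C(m(j+1), j+1) * (j+1) = C(m(j+1), j) * (m(j+1) - j)
    have hsub : m * (j + 1) - j = (m - 1) * (j + 1) + 1 := by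
      obtain ⟨m', rfl⟩ : ∃ m', m = m' + 1 := ⟨m - 1, by omega⟩
      have h1 : (m' + 1) * (j + 1) = m' * (j + 1) + (j + 1) := by ring
      have h2 : (m' + 1 - 1) * (j + 1) = m' * (j + 1) := by simp
      omega
    rw [hsub] at f2
    set c := (Nat.choose (m * (j + 1)) (j + 1) : ℚ) with hc
    set d := (Nat.choose (m * (j + 1)) j : ℚ) with hd
    set t := (((m - 1) * (j + 1) + 1 : ℕ) : ℚ) with hts
    have ht : t ≠ 0 := by
      rw [hts]; positivity
    have f2q : c * ((j : ℚ) + 1) = d * t := by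
      rw [hc, hd, hts]; exact_mod_cast congrArg (Nat.cast : ℕ → ℚ) f2
    have htval : t = ((m : ℚ) - 1) * ((j : ℚ) + 1) + 1 := by
      rw [hts]
      have : ((m - 1) * (j + 1) + 1 : ℕ) = (m - 1) * (j + 1) + 1 := rfl
      push_cast [Nat.cast_sub hm]
      ring
    rw [eq_div_iff ht]
    push_cast
    -- goal: (d + c - m * d) * t = c
    rw [htval] at f2q ⊢
    linear_combination ((m : ℚ) - 1) * f2q

/-- The shift identity `A(1, n+1) = A(m, n)`. -/
lemma A_shift (m : ℕ) (hm : 1 ≤ m) (n : ℕ) : A m 1 (n + 1) = A m m n := by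
  cases n with
  | zero =>
    rw [A_one_succ m 0 hm]
    simp [A, B, Nat.choose_one_right]
  | succ j =>
    rw [A_one_succ m (j + 1) hm]
    have hAm : A m m (j + 1) = B m m (j + 1) - m * B m (m + m - 1) j := rfl
    rw [hAm]
    -- set s = m*(j+1)+m
    have h1 : 1 + m * (j + 1 + 1) = (m * (j + 1) + m) + 1 := by ring
    have h2 : m + m * (j + 1) = m * (j + 1) + m := by ring
    have h3 : m + m - 1 + m * j = m * (j + 1) + m - 1 := by
      cases m with
      | zero => omega
      | succ m' => ring_nf; omega
    simp only [B, h1, h2, h3]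
    set s := m * (j + 1) + m with hs
    have hs1 : 1 ≤ s := by
      have : 1 ≤ m := hm
      omega
    -- e1 : (s+1) * C(s, j+1) = C(s+1, j+2) * (j+2)
    have e1 := Nat.add_one_mul_choose_eq s (j + 1)
    -- e2 : s * C(s-1, j) = C(s, j+1) * (j+1)
    have e2 := Nat.add_one_mul_choose_eq (s - 1) j
    rw [Nat.sub_add_cancel hs1] at e2
    have e1q : ((s : ℚ) + 1) * (Nat.choose s (j + 1) : ℚ)
        = (Nat.choose (s + 1) (j + 2) : ℚ) * ((j : ℚ) + 2) := by
      exact_mod_cast congrArg (Nat.cast : ℕ → ℚ) e1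
    have e2q : (s : ℚ) * (Nat.choose (s - 1) j : ℚ)
        = (Nat.choose s (j + 1) : ℚ) * ((j : ℚ) + 1) := by
      exact_mod_cast congrArg (Nat.cast : ℕ → ℚ) e2
    have hsq : (s : ℚ) = m * ((j : ℚ) + 2) := by
      rw [hs]; push_cast; ring
    have hj2 : ((j : ℚ) + 2) ≠ 0 := by positivity
    apply mul_right_cancel₀ hj2
    linear_combination (-1 : ℚ) * e1q + e2q
      + ((Nat.choose s (j + 1) : ℚ) - (Nat.choose (s - 1) j : ℚ)) * hsq

end FCaux

/-- Grunert's equation (1841): the generating function `F ∈ ℚ⟦X⟧` of the Fuss–Catalan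
numbers `binom(mn, n)/((m−1)n + 1)`, for `m ≥ 2`, satisfies `F = 1 + X·Fᵐ`,
equivalently `X·Fᵐ = F − 1`. -/
theorem fussCatalan_gf_eq (m : ℕ) (hm : 2 ≤ m)
    (F : PowerSeries ℚ)
    (hF : F = PowerSeries.mk fun n => (Nat.choose (m * n) n : ℚ) / (((m - 1) * n + 1 : ℕ) : ℚ)) :
    F = 1 + PowerSeries.X * F ^ m ∧ PowerSeries.X * F ^ m = F - 1 := by
  have hm1 : 1 ≤ m := by omega
  have hcoeff : ∀ n, PowerSeries.coeff n F = FCaux.A m 1 n := by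
    intro n
    rw [hF, PowerSeries.coeff_mk]
    exact (FCaux.A_one_eq m hm1 n).symm
  have hpow : ∀ x, ∀ n, PowerSeries.coeff n (F ^ (x + 1)) = FCaux.A m (x + 1) n := by
    intro x
    induction x with
    | zero => intro n; rw [pow_one]; exact hcoeff n
    | succ x ih =>
      intro n
      rw [pow_succ', PowerSeries.coeff_mul,
        Finset.Nat.sum_antidiagonal_eq_sum_range_succ_mk]
      simp only [hcoeff, ih]
      exact FCaux.C2 m hm1 n (x + 1)
  have hFm : ∀ n, PowerSeries.coeff n (F ^ m) = FCaux.A m m n := by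
    intro n
    have h : m - 1 + 1 = m := by omega
    rw [← h, hpow (m - 1) n, h]
  have h1 : F = 1 + PowerSeries.X * F ^ m := by
    ext n
    cases n with
    | zero =>
      simp only [map_add, PowerSeries.coeff_one, if_pos rfl, hcoeff 0]
      rw [PowerSeries.coeff_zero_eq_constantCoeff, map_mul,
        PowerSeries.constantCoeff_X, zero_mul]
      simp [FCaux.A]
    | succ n =>
      rw [map_add, PowerSeries.coeff_one, if_neg (Nat.succ_ne_zero n),
        PowerSeries.coeff_succ_X_mul, hcoeff (n + 1), hFm n,
        FCaux.A_shift m hm1 n, zero_add]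
  refine ⟨h1, ?_⟩
  rw [eq_sub_iff_add_eq, add_comm]
  exact h1.symm
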